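/- Let X be a biquandle and Y an X-set. Then the degenerate chains form a subcomplex of the shadow birack chain complex: for all n, ∂_n(C_n^{BD}(X)_Y) ⊆ C_{n−1}^{BD}(X)_Y, where C_n^{BD}(X)_Y is generated by tuples (y, x_1, …, x_n) with x_i = x_{i+1} for some i. -/

import Mathlib

/-- A biquandle: a set with two binary operations `ul` (x ▷̲ y) and `ol` (x ▷̄ y)
satisfying the biquandle axioms (B1)-(B4). -/
structure Biquandle (X : Type*) where
  ul : X → X → X
  ol : X → X → X
  b1 : ∀ x, ul x x = ol x x
  b2u : ∀ y, Function.Bijective fun x => ul x y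
  b2o : ∀ y, Function.Bijective fun x => ol x y
  b3 : Function.Bijective (fun p : X × X => (ol p.2 p.1, ul p.1 p.2))
  b4a : ∀ x y z, ul (ul x y) (ul z y) = ul (ul x z) (ol y z)
  b4b : ∀ x y z, ol (ul x y) (ul z y) = ul (ol x z) (ol y z)
  b4c : ∀ x y z, ol (ol x y) (ol z y) = ol (ol x z) (ul y z)

/-- The birack boundary map ∂ : C_{n+1}^{BR}(X) → C_n^{BR}(X) on the free abelian
groups on tuples, given by
∂(x_1,…,x_m) = Σ_i (-1)^i [(x_1,…,x̂_i,…,x_m) - (x_1 ▷̲ x_i,…,x_{i-1} ▷̲ x_i, x_{i+1} ▷̄ x_i,…,x_m ▷̄ x_i)],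
and ∂ = 0 in degrees ≤ 1. -/
noncomputable def bqBoundary {X : Type*} (B : Biquandle X) (n : ℕ) :
    FreeAbelianGroup (Fin (n + 1) → X) →+ FreeAbelianGroup (Fin n → X) :=
  if n = 0 then 0 else
  FreeAbelianGroup.lift fun x : Fin (n + 1) → X =>
    ∑ i : Fin (n + 1), ((-1 : ℤ) ^ ((i : ℕ) + 1)) •
      (FreeAbelianGroup.of (x ∘ i.succAbove) -
       FreeAbelianGroup.of (fun j : Fin n =>
         if ((i.succAbove j : Fin (n + 1)) : ℕ) < (i : ℕ)
           then B.ul (x (i.succAbove j)) (x i)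
           else B.ol (x (i.succAbove j)) (x i)))

/-- The subgroup C_n^{BD}(X) of degenerate chains, generated by tuples with two
equal consecutive entries. -/
def degen (X : Type*) (n : ℕ) : AddSubgroup (FreeAbelianGroup (Fin n → X)) :=
  AddSubgroup.closure {c | ∃ x : Fin n → X,
    (∃ i j : Fin n, (i : ℕ) + 1 = (j : ℕ) ∧ x i = x j) ∧ c = FreeAbelianGroup.of x}

/-- The relations a · (b ▷̄ a) = b · (a ▷̲ b) defining the associated group of a
biquandle. -/
def bqRels {X : Type*} (B : Biquandle X) : Set (FreeGroup X) :=
  {r | ∃ a b : X, r = FreeGroup.of a * FreeGroup.of (B.ol b a) *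
      (FreeGroup.of b * FreeGroup.of (B.ul a b))⁻¹}

/-- The associated group G_X = ⟨a ∈ X | a·(b ▷̄ a) = b·(a ▷̲ b)⟩ of a biquandle. -/
abbrev AssocGroup {X : Type*} (B : Biquandle X) : Type _ := PresentedGroup (bqRels B)

/-- The shadow action y ▷̲ x of a biquandle element `x` on an element `y` of an
X-set `Y` (a set with a right action of the associated group), given by the right
action of the generator corresponding to `x`. -/
noncomputable def sact {X : Type*} (B : Biquandle X) {Y : Type*}
    [MulAction (AssocGroup B)ᵐᵒᵖ Y] (y : Y) (x : X) : Y :=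
  MulOpposite.op (PresentedGroup.of x : AssocGroup B) • y

/-- The shadow birack boundary map ∂ : C_{n+1}^{BR}(X)_Y → C_n^{BR}(X)_Y. -/
noncomputable def sBoundary {X : Type*} (B : Biquandle X) (Y : Type*)
    [MulAction (AssocGroup B)ᵐᵒᵖ Y] (n : ℕ) :
    FreeAbelianGroup (Y × (Fin (n + 1) → X)) →+ FreeAbelianGroup (Y × (Fin n → X)) :=
  if n = 0 then 0 else
  FreeAbelianGroup.lift fun yx : Y × (Fin (n + 1) → X) =>
    ∑ i : Fin (n + 1), ((-1 : ℤ) ^ ((i : ℕ) + 1)) •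
      (FreeAbelianGroup.of (yx.1, yx.2 ∘ i.succAbove) -
       FreeAbelianGroup.of (sact B yx.1 (yx.2 i), fun j : Fin n =>
         if ((i.succAbove j : Fin (n + 1)) : ℕ) < (i : ℕ)
           then B.ul (yx.2 (i.succAbove j)) (yx.2 i)
           else B.ol (yx.2 (i.succAbove j)) (yx.2 i)))

/-- The subgroup C_n^{BD}(X)_Y of degenerate shadow chains, generated by tuples
(y, x_1, …, x_n) with x_i = x_{i+1} for some i. -/
def sDegen (X Y : Type*) (n : ℕ) : AddSubgroup (FreeAbelianGroup (Y × (Fin n → X))) :=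
  AddSubgroup.closure {c | ∃ (y : Y) (x : Fin n → X),
    (∃ i j : Fin n, (i : ℕ) + 1 = (j : ℕ) ∧ x i = x j) ∧ c = FreeAbelianGroup.of (y, x)}


section SDegenAux

private lemma sA_ge {n : ℕ} (i : Fin (n + 1)) (a : Fin n) (h : (i : ℕ) ≤ (a : ℕ)) :
    i.succAbove a = a.succ :=
  Fin.succAbove_of_le_castSucc _ _ (by simpa [Fin.le_def] using h)

private lemma sA_lt {n : ℕ} (i : Fin (n + 1)) (a : Fin n) (h : (a : ℕ) < (i : ℕ)) :
    i.succAbove a = a.castSucc :=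
  Fin.succAbove_of_castSucc_lt _ _ (by simpa [Fin.lt_def] using h)

private lemma mem_sDegen_of {X Y : Type*} {n : ℕ} (y : Y) (x : Fin n → X) (a b : Fin n)
    (hab : (a : ℕ) + 1 = (b : ℕ)) (hx : x a = x b) :
    FreeAbelianGroup.of (y, x) ∈ sDegen X Y n :=
  AddSubgroup.subset_closure ⟨y, x, ⟨a, b, hab, hx⟩, rfl⟩

private lemma sum_mem_cancel {M : Type*} [AddCommGroup M] {m : ℕ} (H : AddSubgroup M)
    (t : Fin m → M) (k j : Fin m) (hkj : k ≠ j) (hc : t k + t j = 0)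
    (h : ∀ i, i ≠ k → i ≠ j → t i ∈ H) : ∑ i, t i ∈ H := by
  classical
  have hjk : j ∈ Finset.univ.erase k := Finset.mem_erase.2 ⟨hkj.symm, Finset.mem_univ _⟩
  rw [← Finset.add_sum_erase _ t (Finset.mem_univ k), ← Finset.add_sum_erase _ t hjk,
    ← add_assoc, hc, zero_add]
  refine AddSubgroup.sum_mem _ fun i hi => ?_
  obtain ⟨hij, hi'⟩ := Finset.mem_erase.1 hi
  exact h i (Finset.mem_erase.1 hi').1 hij

private lemma key {X : Type*} (B : Biquandle X) {Y : Type*}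
    [MulAction (AssocGroup B)ᵐᵒᵖ Y] (n : ℕ) (hn : n ≠ 0) (y : Y) (x : Fin (n + 1) → X)
    (k j : Fin (n + 1)) (hkj : (k : ℕ) + 1 = (j : ℕ)) (hx : x k = x j) :
    sBoundary B Y n (FreeAbelianGroup.of (y, x)) ∈ sDegen X Y n := by
  rw [sBoundary, if_neg hn, FreeAbelianGroup.lift_apply_of]
  have hkn : (k : ℕ) < n := by have := j.isLt; omega
  refine sum_mem_cancel (sDegen X Y n)
    (fun i => ((-1 : ℤ) ^ ((i : ℕ) + 1)) •
      (FreeAbelianGroup.of (y, x ∘ i.succAbove) -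
       FreeAbelianGroup.of (sact B y (x i), fun p : Fin n =>
         if ((i.succAbove p : Fin (n + 1)) : ℕ) < (i : ℕ)
           then B.ul (x (i.succAbove p)) (x i)
           else B.ol (x (i.succAbove p)) (x i))))
    k j (fun h => by omega) ?_ ?_
  · -- cancellation of the k and j terms
    have e1 : x ∘ k.succAbove = x ∘ j.succAbove := by
      funext p
      simp only [Function.comp_apply]
      rcases lt_trichotomy ((p : ℕ)) ((k : ℕ)) with h | h | h
      · rw [sA_lt _ _ h, sA_lt _ _ (by omega)]
      · rw [sA_ge _ _ (by omega), sA_lt _ _ (by omega)]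
        have h1 : p.succ = j := Fin.ext (by simp [Fin.val_succ]; omega)
        have h2 : p.castSucc = k := Fin.ext (by simp [Fin.coe_castSucc]; omega)
        rw [h1, h2, hx]
      · rw [sA_ge _ _ (by omega), sA_ge _ _ (by omega)]
    have e3 : (fun p : Fin n =>
         if ((k.succAbove p : Fin (n + 1)) : ℕ) < (k : ℕ)
           then B.ul (x (k.succAbove p)) (x k)
           else B.ol (x (k.succAbove p)) (x k)) = (fun p : Fin n =>
         if ((j.succAbove p : Fin (n + 1)) : ℕ) < (j : ℕ)
           then B.ul (x (j.succAbove p)) (x j)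
           else B.ol (x (j.succAbove p)) (x j)) := by
      funext p
      rcases lt_trichotomy ((p : ℕ)) ((k : ℕ)) with h | h | h
      · rw [sA_lt _ _ h, sA_lt _ _ (by omega)]
        rw [if_pos (by simp [Fin.coe_castSucc]; omega),
            if_pos (by simp [Fin.coe_castSucc]; omega), hx]
      · rw [sA_ge _ _ (by omega), sA_lt _ _ (by omega)]
        rw [if_neg (by simp [Fin.val_succ]; omega),
            if_pos (by simp [Fin.coe_castSucc]; omega)]
        have h1 : p.succ = j := Fin.ext (by simp [Fin.val_succ]; omega)
        have h2 : p.castSucc = k := Fin.ext (by simp [Fin.coe_castSucc]; omega)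
        rw [h1, h2, hx, B.b1]
      · rw [sA_ge _ _ (by omega), sA_ge _ _ (by omega)]
        rw [if_neg (by simp [Fin.val_succ]; omega),
            if_neg (by simp [Fin.val_succ]; omega), hx]
    have hsign : ((-1 : ℤ) ^ ((j : ℕ) + 1)) = -((-1 : ℤ) ^ ((k : ℕ) + 1)) := by
      rw [← hkj, pow_succ]; ring
    simp only [hsign, neg_smul]
    rw [e1, e3, hx]
    exact add_neg_cancel _
  · -- the remaining terms are degenerate
    intro i hik hij
    have hik' : (i : ℕ) ≠ (k : ℕ) := fun h => hik (Fin.ext h)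
    have hij' : (i : ℕ) ≠ (j : ℕ) := fun h => hij (Fin.ext h)
    rcases lt_or_gt_of_ne hik' with hlt | hgt <;>
      refine AddSubgroup.zsmul_mem _ (AddSubgroup.sub_mem _ ?_ ?_) _
    · -- untwisted face, case i < k
      refine mem_sDegen_of y _ ⟨(k : ℕ) - 1, by omega⟩ ⟨(k : ℕ), hkn⟩ (by simp; omega) ?_
      have ha : i.succAbove ⟨(k : ℕ) - 1, by omega⟩ = k := by
        rw [sA_ge _ _ (by simp; omega)]; exact Fin.ext (by simp [Fin.val_succ]; omega)
      have hb : i.succAbove ⟨(k : ℕ), hkn⟩ = j := by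
        rw [sA_ge _ _ (by simp; omega)]; exact Fin.ext (by simp [Fin.val_succ]; omega)
      simp only [Function.comp_apply, ha, hb, hx]
    · -- twisted face, case i < k
      refine mem_sDegen_of _ _ ⟨(k : ℕ) - 1, by omega⟩ ⟨(k : ℕ), hkn⟩ (by simp; omega) ?_
      have ha : i.succAbove ⟨(k : ℕ) - 1, by omega⟩ = k := by
        rw [sA_ge _ _ (by simp; omega)]; exact Fin.ext (by simp [Fin.val_succ]; omega)
      have hb : i.succAbove ⟨(k : ℕ), hkn⟩ = j := by
        rw [sA_ge _ _ (by simp; omega)]; exact Fin.ext (by simp [Fin.val_succ]; omega)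
      simp only [ha, hb]
      rw [if_neg (by omega), if_neg (by omega), hx]
    · -- untwisted face, case j < i
      have hin : (j : ℕ) < n := by have := i.isLt; omega
      refine mem_sDegen_of y _ ⟨(k : ℕ), hkn⟩ ⟨(j : ℕ), hin⟩ (by simpa using hkj) ?_
      have ha : i.succAbove ⟨(k : ℕ), hkn⟩ = k := by
        rw [sA_lt _ _ (by simp; omega)]; exact Fin.ext (by simp)
      have hb : i.succAbove ⟨(j : ℕ), hin⟩ = j := by
        rw [sA_lt _ _ (by simp; omega)]; exact Fin.ext (by simp)
      simp only [Function.comp_apply, ha, hb, hx]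
    · -- twisted face, case j < i
      have hin : (j : ℕ) < n := by have := i.isLt; omega
      refine mem_sDegen_of _ _ ⟨(k : ℕ), hkn⟩ ⟨(j : ℕ), hin⟩ (by simpa using hkj) ?_
      have ha : i.succAbove ⟨(k : ℕ), hkn⟩ = k := by
        rw [sA_lt _ _ (by simp; omega)]; exact Fin.ext (by simp)
      have hb : i.succAbove ⟨(j : ℕ), hin⟩ = j := by
        rw [sA_lt _ _ (by simp; omega)]; exact Fin.ext (by simp)
      simp only [ha, hb]
      rw [if_pos (by omega), if_pos (by omega), hx]

end SDegenAux

/-- The degenerate shadow chains form a subcomplex of the shadow birack chain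
complex: ∂(C_n^{BD}(X)_Y) ⊆ C_{n-1}^{BD}(X)_Y. -/
theorem sDegen_subcomplex {X : Type*} (B : Biquandle X) (Y : Type*)
    [Nonempty Y] [MulAction (AssocGroup B)ᵐᵒᵖ Y] :
    ∀ (n : ℕ) (c : FreeAbelianGroup (Y × (Fin (n + 1) → X))),
      c ∈ sDegen X Y (n + 1) → sBoundary B Y n c ∈ sDegen X Y n := by
  intro n c hc
  have hle : sDegen X Y (n + 1) ≤ AddSubgroup.comap (sBoundary B Y n) (sDegen X Y n) := by
    refine (AddSubgroup.closure_le _).2 ?_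
    rintro c ⟨y, x, ⟨a, b, hab, hx⟩, rfl⟩
    simp only [SetLike.mem_coe, AddSubgroup.mem_comap]
    rcases Nat.eq_zero_or_pos n with h0 | hpos
    · subst h0
      rw [sBoundary, if_pos rfl]
      exact (sDegen X Y 0).zero_mem
    · exact key B n hpos.ne' y x a b hab hx
  exact hle hc
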